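/- For every integer p ≥ 2 and every integer r ≥ 1, the integer r² divides the integer ∑_{d ∣ r} μ(r/d)·(−1)^d·C((2p+2)·d − 1, d − 1). (Equivalently, the top BPS invariants b⁺_r = (1/r²)·∑_{d ∣ r} μ(r/d)·(−1)^d·C((2p+2)d − 1, d − 1) of the twist knot K_p with p ≥ 2 are integers.) -/

import Mathlib

open Finset


private lemma sum_units_eq_zero (m : ℕ) [NeZero m] (h2 : (2 : ZMod m) ≠ 0) :
    ∑ u : (ZMod m)ˣ, (u : ZMod m) = 0 := by
  refine Finset.sum_ninvolution (fun u => -u) (fun u => ?_) (fun u hu => ?_)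
    (fun u => Finset.mem_univ _) (fun u => neg_neg u)
  · push_cast; ring
  · intro h
    apply h2
    have hval : (-(u : ZMod m)) = (u : ZMod m) := by
      have := congrArg (Units.val) h
      simpa using this
    have h2u : (2 : ZMod m) * (u : ZMod m) = 0 := by linear_combination -hval
    calc (2 : ZMod m) = 2 * ((u : ZMod m) * ((u⁻¹ : (ZMod m)ˣ) : ZMod m)) := by
          rw [Units.mul_inv]; ring
      _ = (2 * (u : ZMod m)) * ((u⁻¹ : (ZMod m)ˣ) : ZMod m) := by ring
      _ = 0 := by rw [h2u, zero_mul]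

private lemma sum_inv_eq_zero (q c n : ℕ) (hq : q.Prime) (hdvd : q ^ c ∣ n)
    (h2 : q = 2 → q ^ (c + 1) ∣ n) :
    ∑ j ∈ (range n).filter (fun j => ¬ q ∣ j), ((j : ZMod (q ^ c)))⁻¹ = 0 := by
  rcases Nat.eq_zero_or_pos c with rfl | hc
  · haveI : Subsingleton (ZMod (q ^ 0)) := by rw [pow_zero]; infer_instance
    exact Subsingleton.elim _ _
  haveI : NeZero (q ^ c) := ⟨pow_ne_zero _ hq.pos.ne'⟩
  obtain ⟨t, rfl⟩ := hdvd
  set m := q ^ c with hm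
  have hqm : q ∣ m := dvd_pow_self q hc.ne'
  rw [Finset.sum_filter]
  have periodic : ∀ s i : ℕ,
      (if ¬ q ∣ (m * s + i) then ((m * s + i : ℕ) : ZMod m)⁻¹ else 0)
        = (if ¬ q ∣ i then ((i : ℕ) : ZMod m)⁻¹ else 0) := by
    intro s i
    have h1 : (q ∣ m * s + i) ↔ q ∣ i := by
      constructor
      · intro h; exact (Nat.dvd_add_right (hqm.mul_right s)).mp h
      · intro h; exact dvd_add (hqm.mul_right s) h
    have hcast : ((m * s + i : ℕ) : ZMod m) = (i : ZMod m) := by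
      push_cast [ZMod.natCast_self]; ring
    simp only [h1, hcast]
  have stepB : ∀ T : ℕ,
      ∑ j ∈ range (m * T), (if ¬ q ∣ j then ((j : ℕ) : ZMod m)⁻¹ else 0)
        = T • ∑ j ∈ range m, (if ¬ q ∣ j then ((j : ℕ) : ZMod m)⁻¹ else 0) := by
    intro T
    induction T with
    | zero => simp
    | succ T ih =>
        rw [Nat.mul_succ, Finset.sum_range_add, ih, succ_nsmul]
        congr 1
        exact Finset.sum_congr rfl fun i _ => periodic T i
  rw [stepB t]
  by_cases h20 : (2 : ZMod m) = 0
  · have hm2 : m ∣ 2 :=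
      (ZMod.natCast_eq_zero_iff 2 m).mp (by exact_mod_cast h20)
    have hq2 : q = 2 := by
      have h1 : q ≤ m := Nat.le_self_pow hc.ne' q
      have h2' : m ≤ 2 := Nat.le_of_dvd (by norm_num) hm2
      have := hq.two_le
      omega
    have hdvd4 : q ^ (c + 1) ∣ m * t := h2 hq2
    have hqt : q ∣ t := by
      have : q ^ c * q ∣ q ^ c * t := by rw [← pow_succ]; exact hdvd4
      exact (mul_dvd_mul_iff_left (pow_ne_zero c hq.pos.ne')).mp this
    rw [nsmul_eq_mul]
    have ht0 : ((t : ℕ) : ZMod m) = 0 := by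
      rw [ZMod.natCast_eq_zero_iff]
      exact dvd_trans hm2 (hq2 ▸ hqt)
    rw [ht0, zero_mul]
  · have key0 : ∑ j ∈ range m, (if ¬ q ∣ j then ((j : ℕ) : ZMod m)⁻¹ else 0) = 0 := by
      have step1 : ∑ j ∈ range m, (if ¬ q ∣ j then ((j : ℕ) : ZMod m)⁻¹ else 0)
          = ∑ x : ZMod m, (if IsUnit x then x⁻¹ else 0) := by
        apply Finset.sum_nbij' (i := fun j => ((j : ℕ) : ZMod m))
          (j := fun x => x.val)
        · intro a _; exact Finset.mem_univ _
        · intro x _; exact Finset.mem_range.mpr (ZMod.val_lt x)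
        · intro a ha; exact ZMod.val_cast_of_lt (Finset.mem_range.mp ha)
        · intro x _; rw [ZMod.natCast_val, ZMod.cast_id]
        · intro a _
          have hiff : IsUnit ((a : ℕ) : ZMod m) ↔ ¬ q ∣ a := by
            rw [ZMod.isUnit_iff_coprime, hm, Nat.coprime_pow_right_iff hc,
              Nat.coprime_comm, hq.coprime_iff_not_dvd]
          by_cases hu : q ∣ a
          · rw [if_neg (by simpa using hu), if_neg (by rw [hiff]; simpa using hu)]
          · rw [if_pos hu, if_pos (hiff.mpr hu)]
      rw [step1]
      have himg : Finset.univ.filter (fun x : ZMod m => IsUnit x)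
          = Finset.univ.image (fun u : (ZMod m)ˣ => (u : ZMod m)) := by
        ext x
        simp only [Finset.mem_filter, Finset.mem_univ, true_and, Finset.mem_image]
        constructor
        · rintro ⟨u, rfl⟩; exact ⟨u, rfl⟩
        · rintro ⟨u, rfl⟩; exact u.isUnit
      rw [Finset.sum_ite, Finset.sum_const_zero, add_zero, himg,
        Finset.sum_image (by intro a _ b _ h; exact Units.ext h)]
      have step3 : ∀ u : (ZMod m)ˣ, ((u : ZMod m))⁻¹ = ((u⁻¹ : (ZMod m)ˣ) : ZMod m) :=
        fun u => ZMod.inv_coe_unit u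
      rw [Finset.sum_congr rfl fun u _ => step3 u]
      have hswap : ∑ u : (ZMod m)ˣ, ((u⁻¹ : (ZMod m)ˣ) : ZMod m)
          = ∑ u : (ZMod m)ˣ, (u : ZMod m) :=
        Finset.sum_equiv (Equiv.inv (ZMod m)ˣ) (by simp) (by intro i _; simp)
      rw [hswap]
      exact sum_units_eq_zero m h20
    rw [key0, smul_zero]

private lemma prodSub (s : Finset ℕ) (N : ℤ) :
    ∃ t : ℤ, ∏ j ∈ s, ((j : ℤ) - N) =
      (∏ j ∈ s, (j : ℤ)) - N * (∑ j ∈ s, ∏ k ∈ s.erase j, (k : ℤ)) + N ^ 2 * t := by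
  classical
  induction s using Finset.induction_on with
  | empty => exact ⟨0, by simp⟩
  | @insert x s hx ih =>
    obtain ⟨t, ht⟩ := ih
    refine ⟨(x : ℤ) * t + (∑ j ∈ s, ∏ k ∈ s.erase j, (k : ℤ)) - N * t, ?_⟩
    rw [Finset.prod_insert hx, ht, Finset.prod_insert hx, Finset.sum_insert hx,
      Finset.erase_insert hx]
    have hre : ∀ j ∈ s, ∏ k ∈ (insert x s).erase j, (k : ℤ)
        = (x : ℤ) * ∏ k ∈ s.erase j, (k : ℤ) := by
      intro j hj
      rw [Finset.erase_insert_of_ne (by rintro rfl; exact hx hj),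
        Finset.prod_insert (fun h => hx (Finset.mem_of_mem_erase h))]
    rw [Finset.sum_congr rfl hre, ← Finset.mul_sum]
    ring

private lemma sigma_dvd (q c n : ℕ) (hq : q.Prime) (hdvd : q ^ c ∣ n)
    (h2 : q = 2 → q ^ (c + 1) ∣ n) :
    ((q : ℤ)) ^ c ∣ ∑ j ∈ (Ico 1 n).filter (fun j => ¬ q ∣ j),
      ∏ k ∈ ((Ico 1 n).filter (fun j => ¬ q ∣ j)).erase j, (k : ℤ) := by
  haveI : NeZero (q ^ c) := ⟨pow_ne_zero _ hq.pos.ne'⟩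
  have hset : (Ico 1 n).filter (fun j => ¬ q ∣ j) = (range n).filter (fun j => ¬ q ∣ j) := by
    ext j
    simp only [Finset.mem_filter, Finset.mem_Ico, Finset.mem_range]
    constructor
    · rintro ⟨⟨h1, h2'⟩, h3⟩; exact ⟨h2', h3⟩
    · rintro ⟨h2', h3⟩
      refine ⟨⟨?_, h2'⟩, h3⟩
      rcases Nat.eq_zero_or_pos j with rfl | h
      · exact absurd (dvd_zero q) h3
      · exact h
  rw [hset]
  set S := (range n).filter (fun j => ¬ q ∣ j) with hS
  rw [show ((q : ℤ)) ^ c = ((q ^ c : ℕ) : ℤ) by push_cast; ring,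
    ← ZMod.intCast_zmod_eq_zero_iff_dvd]
  push_cast
  set m := q ^ c with hm
  have hunit : ∀ j ∈ S, IsUnit ((j : ℕ) : ZMod m) := by
    intro j hj
    rw [ZMod.isUnit_iff_coprime]
    exact Nat.Coprime.pow_right c
      ((Nat.coprime_comm.mp (hq.coprime_iff_not_dvd.mpr (Finset.mem_filter.mp hj).2)))
  have hterm : ∀ j ∈ S, ∏ k ∈ S.erase j, ((k : ℕ) : ZMod m)
      = (((j : ℕ) : ZMod m))⁻¹ * ∏ k ∈ S, ((k : ℕ) : ZMod m) := by
    intro j hj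
    rw [← Finset.mul_prod_erase S _ hj, ← mul_assoc,
      ZMod.inv_mul_of_unit _ (hunit j hj), one_mul]
  rw [Finset.sum_congr rfl hterm, ← Finset.sum_mul, hS,
    sum_inv_eq_zero q c n hq hdvd h2, zero_mul]
private lemma key_cong (M q d a : ℕ) (hq : q.Prime) (hM2 : 2 ∣ M) (hM0 : 0 < M)
    (hd : 0 < d) (ha : 1 ≤ a) (hda : q ^ (a - 1) ∣ d) :
    ((q : ℤ)) ^ (2 * a) ∣
      (-1) ^ (q * d) * ((M * (q * d) - 1).choose (q * d - 1) : ℤ) -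
        (-1) ^ d * ((M * d - 1).choose (d - 1) : ℤ) := by
  have hq2 := hq.two_le
  have hq0 : 0 < q := hq.pos
  have hqd : 0 < q * d := Nat.mul_pos hq0 hd
  have hdqd : d ≤ q * d := Nat.le_mul_of_pos_left d hq0
  have hqa : q ^ a ∣ q * d := by
    have h' : q ^ (a - 1 + 1) ∣ q * d := by
      rw [pow_succ']
      exact mul_dvd_mul_left q hda
    rwa [show a - 1 + 1 = a from by omega] at h'
  set S : Finset ℕ := (Finset.Ico 1 (q * d)).filter (fun j => ¬ q ∣ j) with hS
  set A : ℕ := ∏ j ∈ S, (M * (q * d) - j) with hA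
  set B : ℕ := ∏ j ∈ S, j with hB
  set C₁ : ℕ := (M * (q * d) - 1).choose (q * d - 1) with hC₁
  set C₀ : ℕ := (M * d - 1).choose (d - 1) with hC₀
  -- the q-divisible part of Ico 1 (q*d) is the image of Ico 1 d
  have himg : (Finset.Ico 1 (q * d)).filter (fun j => q ∣ j)
      = (Finset.Ico 1 d).image (fun i => q * i) := by
    ext j
    simp only [Finset.mem_filter, Finset.mem_Ico, Finset.mem_image]
    constructor
    · rintro ⟨⟨h1, h2⟩, i, rfl⟩
      refine ⟨i, ⟨?_, Nat.lt_of_mul_lt_mul_left h2⟩, rfl⟩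
      rcases Nat.eq_zero_or_pos i with rfl | h
      · simp at h1
      · exact h
    · rintro ⟨i, ⟨h1, h2⟩, rfl⟩
      exact ⟨⟨Nat.mul_pos hq0 h1, (Nat.mul_lt_mul_left hq0).mpr h2⟩, Dvd.intro i rfl⟩
  have hinj : Function.Injective (fun i : ℕ => q * i) :=
    fun i j h => Nat.eq_of_mul_eq_mul_left hq0 h
  have hcard : S.card = q * d - d := by
    have h1 := Finset.card_filter_add_card_filter_not
      (s := Finset.Ico 1 (q * d)) (p := fun j => q ∣ j)
    rw [himg, Finset.card_image_of_injective _ hinj] at h1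
    simp only [Nat.card_Ico] at h1
    rw [hS]
    omega
  -- descending factorial products over Ico
  have prodIco : ∀ n N : ℕ, 0 < n →
      (N - 1).descFactorial (n - 1) = ∏ j ∈ Finset.Ico 1 n, (N - j) := by
    intro n N hn
    rw [Nat.descFactorial_eq_prod_range, Finset.prod_Ico_eq_prod_range]
    exact Finset.prod_congr rfl fun i _ => by omega
  have hfactIco : ∀ n : ℕ, 0 < n → Nat.factorial (n - 1) = ∏ j ∈ Finset.Ico 1 n, j := by
    intro n hn
    rw [← Finset.prod_Ico_id_eq_factorial (n - 1), show n - 1 + 1 = n from by omega]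
  -- split the q-divisible parts
  have part1 : ∏ j ∈ (Finset.Ico 1 (q * d)).filter (fun j => q ∣ j), (M * (q * d) - j)
      = q ^ (d - 1) * ∏ i ∈ Finset.Ico 1 d, (M * d - i) := by
    rw [himg, Finset.prod_image (fun a _ b _ h => hinj h)]
    have : ∀ i ∈ Finset.Ico 1 d, (M * (q * d) - q * i) = q * (M * d - i) := by
      intro i _
      rw [Nat.mul_sub]
      ring_nf
    rw [Finset.prod_congr rfl this, Finset.prod_mul_distrib, Finset.prod_const, Nat.card_Ico]
  have part2 : ∏ j ∈ (Finset.Ico 1 (q * d)).filter (fun j => q ∣ j), j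
      = q ^ (d - 1) * ∏ i ∈ Finset.Ico 1 d, i := by
    rw [himg, Finset.prod_image (fun a _ b _ h => hinj h), Finset.prod_mul_distrib,
      Finset.prod_const, Nat.card_Ico]
  -- the exact integer identity C₁ * B = C₀ * A
  have iden : C₁ * B = C₀ * A := by
    have e1 : (M * (q * d) - 1).descFactorial (q * d - 1)
        = q ^ (d - 1) * ((M * d - 1).descFactorial (d - 1)) * A := by
      rw [prodIco (q * d) (M * (q * d)) hqd,
        ← Finset.prod_filter_mul_prod_filter_not (Finset.Ico 1 (q * d)) (fun j => q ∣ j),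
        part1, prodIco d (M * d) hd, hA, hS]
    have e2 : Nat.factorial (q * d - 1) = q ^ (d - 1) * Nat.factorial (d - 1) * B := by
      rw [hfactIco (q * d) hqd,
        ← Finset.prod_filter_mul_prod_filter_not (Finset.Ico 1 (q * d)) (fun j => q ∣ j),
        part2, hfactIco d hd, hB, hS]
    have e3 : Nat.factorial (q * d - 1) * C₁ = (M * (q * d) - 1).descFactorial (q * d - 1) :=
      (Nat.descFactorial_eq_factorial_mul_choose _ _).symm
    have e4 : Nat.factorial (d - 1) * C₀ = (M * d - 1).descFactorial (d - 1) :=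
      (Nat.descFactorial_eq_factorial_mul_choose _ _).symm
    have e5 : (q ^ (d - 1) * Nat.factorial (d - 1)) * (C₁ * B)
        = (q ^ (d - 1) * Nat.factorial (d - 1)) * (C₀ * A) := by
      calc (q ^ (d - 1) * Nat.factorial (d - 1)) * (C₁ * B)
          = (q ^ (d - 1) * Nat.factorial (d - 1) * B) * C₁ := by ring
        _ = Nat.factorial (q * d - 1) * C₁ := by rw [e2]
        _ = (M * (q * d) - 1).descFactorial (q * d - 1) := e3
        _ = q ^ (d - 1) * ((M * d - 1).descFactorial (d - 1)) * A := e1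
        _ = q ^ (d - 1) * (Nat.factorial (d - 1) * C₀) * A := by rw [e4]
        _ = (q ^ (d - 1) * Nat.factorial (d - 1)) * (C₀ * A) := by ring
    exact Nat.eq_of_mul_eq_mul_left
      (Nat.mul_pos (pow_pos hq0 _) (Nat.factorial_pos _)) e5
  -- now pass to ℤ
  set N : ℤ := ((M * (q * d) : ℕ) : ℤ) with hN
  have hA' : (A : ℤ) = ∏ j ∈ S, (N - (j : ℤ)) := by
    rw [hA, Nat.cast_prod]
    apply Finset.prod_congr rfl
    intro j hj
    have hj' : j ≤ M * (q * d) := by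
      have h2 : j < q * d := (Finset.mem_Ico.mp (Finset.mem_filter.mp hj).1).2
      calc j ≤ q * d := le_of_lt h2
        _ ≤ M * (q * d) := Nat.le_mul_of_pos_left _ hM0
    rw [Nat.cast_sub hj']
  have hsign : ∏ j ∈ S, (N - (j : ℤ)) = (-1) ^ S.card * ∏ j ∈ S, ((j : ℤ) - N) := by
    calc ∏ j ∈ S, (N - (j : ℤ)) = ∏ j ∈ S, ((-1) * ((j : ℤ) - N)) :=
          Finset.prod_congr rfl fun j _ => by ring
      _ = (∏ _j ∈ S, (-1 : ℤ)) * ∏ j ∈ S, ((j : ℤ) - N) := Finset.prod_mul_distrib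
      _ = (-1) ^ S.card * ∏ j ∈ S, ((j : ℤ) - N) := by rw [Finset.prod_const]
  obtain ⟨t, ht⟩ := prodSub S N
  -- divisibility facts
  have hNa : ((q : ℤ)) ^ a ∣ N := by
    have h1 : (q ^ a : ℕ) ∣ M * (q * d) := hqa.mul_left M
    rw [hN]
    exact_mod_cast Int.natCast_dvd_natCast.mpr h1
  set c : ℕ := if q = 2 then a - 1 else a with hc
  have hsigdvd : ((q : ℤ)) ^ c ∣ ∑ j ∈ S, ∏ k ∈ S.erase j, (k : ℤ) := by
    apply sigma_dvd q c (q * d) hq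
    · rcases eq_or_ne q 2 with h | h
      · rw [hc, if_pos h]
        exact dvd_trans hda (dvd_mul_left d q)
      · rw [hc, if_neg h]
        exact hqa
    · intro h
      rw [hc, if_pos h, show a - 1 + 1 = a from by omega]
      exact hqa
  have hNc : ((q : ℤ)) ^ (2 * a) ∣ N * ((q : ℤ)) ^ c := by
    rcases eq_or_ne q 2 with h | h
    · have hN2 : ((q : ℤ)) ^ (a + 1) ∣ N := by
        have h1 : (q ^ (a + 1) : ℕ) ∣ M * (q * d) := by
          have h3 : q ∣ M := h ▸ hM2
          calc q ^ (a + 1) = q * q ^ a := by ring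
            _ ∣ M * (q * d) := mul_dvd_mul h3 hqa
        rw [hN]
        exact_mod_cast Int.natCast_dvd_natCast.mpr h1
      rw [hc, if_pos h]
      have : ((q : ℤ)) ^ (2 * a) = ((q : ℤ)) ^ (a + 1) * ((q : ℤ)) ^ (a - 1) := by
        rw [← pow_add]
        congr 1
        omega
      rw [this]
      exact mul_dvd_mul hN2 dvd_rfl
    · rw [hc, if_neg h, two_mul, pow_add]
      exact mul_dvd_mul hNa dvd_rfl
  have hNσ : ((q : ℤ)) ^ (2 * a) ∣ N * (∑ j ∈ S, ∏ k ∈ S.erase j, (k : ℤ)) := by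
    obtain ⟨σ', hσ'⟩ := hsigdvd
    rw [hσ', ← mul_assoc]
    exact Dvd.dvd.mul_right hNc σ'
  have hN2dvd : ((q : ℤ)) ^ (2 * a) ∣ N ^ 2 * t := by
    have : ((q : ℤ)) ^ (2 * a) ∣ N ^ 2 := by
      rw [two_mul, pow_add, sq]
      exact mul_dvd_mul hNa hNa
    exact this.mul_right t
  -- A ≡ (-1)^card S * B
  have h1 : ((q : ℤ)) ^ (2 * a) ∣ (A : ℤ) - (-1) ^ S.card * (B : ℤ) := by
    have hBZ : (B : ℤ) = ∏ j ∈ S, (j : ℤ) := by rw [hB, Nat.cast_prod]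
    rw [hA', hsign, ht, hBZ]
    have : (-1 : ℤ) ^ S.card *
        ((∏ j ∈ S, (j : ℤ)) - N * (∑ j ∈ S, ∏ k ∈ S.erase j, (k : ℤ)) + N ^ 2 * t)
        - (-1) ^ S.card * (∏ j ∈ S, (j : ℤ))
        = (-1) ^ S.card * (N ^ 2 * t - N * (∑ j ∈ S, ∏ k ∈ S.erase j, (k : ℤ))) := by
      ring
    rw [this]
    exact (dvd_sub hN2dvd hNσ).mul_left _
  -- cancel B
  have h2 : ((q : ℤ)) ^ (2 * a) ∣ ((C₁ : ℤ) - (-1) ^ S.card * (C₀ : ℤ)) * (B : ℤ) := by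
    have hidenZ : (C₁ : ℤ) * (B : ℤ) = (C₀ : ℤ) * (A : ℤ) := by exact_mod_cast iden
    have : ((C₁ : ℤ) - (-1) ^ S.card * (C₀ : ℤ)) * (B : ℤ)
        = (C₀ : ℤ) * ((A : ℤ) - (-1) ^ S.card * (B : ℤ)) := by
      linear_combination hidenZ
    rw [this]
    exact h1.mul_left _
  have hcop : IsCoprime (((q : ℤ)) ^ (2 * a)) ((B : ℤ)) := by
    apply IsCoprime.pow_left
    rw [hB]
    push_cast
    apply IsCoprime.prod_right
    intro j hj
    rw [Nat.isCoprime_iff_coprime]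
    exact hq.coprime_iff_not_dvd.mpr (Finset.mem_filter.mp hj).2
  have h3 : ((q : ℤ)) ^ (2 * a) ∣ (C₁ : ℤ) - (-1) ^ S.card * (C₀ : ℤ) :=
    hcop.dvd_of_dvd_mul_right h2
  -- sign bookkeeping
  have hsgn : (-1 : ℤ) ^ (q * d) * (-1) ^ S.card = (-1) ^ d := by
    rw [hcard, ← pow_add]
    have he : q * d + (q * d - d) = d + 2 * (q * d - d) := by omega
    rw [he, pow_add, pow_mul]
    norm_num
  have hfinal : (-1 : ℤ) ^ (q * d) * ((C₁ : ℤ) - (-1) ^ S.card * (C₀ : ℤ))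
      = (-1) ^ (q * d) * (C₁ : ℤ) - (-1) ^ d * (C₀ : ℤ) := by
    rw [mul_sub, ← mul_assoc, hsgn]
  rw [← hfinal]
  exact h3.mul_left _
private lemma sum_div_mul (m n : ℕ) (hm : m ≠ 0) (hn : n ≠ 0) (h : m.Coprime n) (F : ℕ → ℤ) :
    ∑ d ∈ (m * n).divisors, F d = ∑ a ∈ m.divisors, ∑ b ∈ n.divisors, F (a * b) := by
  rw [← Finset.sum_product']
  apply Finset.sum_nbij' (i := fun d => (Nat.gcd d m, Nat.gcd d n))
    (j := fun x => x.1 * x.2)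
  · intro d _
    exact Finset.mem_product.mpr ⟨Nat.mem_divisors.mpr ⟨Nat.gcd_dvd_right d m, hm⟩,
      Nat.mem_divisors.mpr ⟨Nat.gcd_dvd_right d n, hn⟩⟩
  · rintro ⟨x, y⟩ hx
    obtain ⟨hx1, hx2⟩ := Finset.mem_product.mp hx
    exact Nat.mem_divisors.mpr
      ⟨mul_dvd_mul (Nat.mem_divisors.mp hx1).1 (Nat.mem_divisors.mp hx2).1,
        mul_ne_zero hm hn⟩
  · intro d hd
    have hdvd : d ∣ m * n := (Nat.mem_divisors.mp hd).1
    exact (Nat.Coprime.gcd_mul d h).symm.trans (Nat.gcd_eq_left hdvd)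
  · rintro ⟨x, y⟩ hx
    obtain ⟨hx1, hx2⟩ := Finset.mem_product.mp hx
    have ha := (Nat.mem_divisors.mp hx1).1
    have hb := (Nat.mem_divisors.mp hx2).1
    have hbm : y.Coprime m := Nat.Coprime.coprime_dvd_left hb h.symm
    have ham : x.Coprime n := Nat.Coprime.coprime_dvd_left ha h
    have e1 : (x * y).gcd m = x := by
      rw [Nat.Coprime.gcd_mul_right_cancel x hbm]
      exact Nat.gcd_eq_left ha
    have e2 : (x * y).gcd n = y := by
      rw [mul_comm, Nat.Coprime.gcd_mul_right_cancel y ham]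
      exact Nat.gcd_eq_left hb
    simp [e1, e2]
  · intro d hd
    have hdvd : d ∣ m * n := (Nat.mem_divisors.mp hd).1
    have hgg : d.gcd m * d.gcd n = d :=
      (Nat.Coprime.gcd_mul d h).symm.trans (Nat.gcd_eq_left hdvd)
    rw [hgg]

theorem twist_knot_pos_top_bps_integrality (p r : ℕ) (hp : 2 ≤ p) (hr : 1 ≤ r) :
    ((r : ℤ) ^ 2) ∣ ∑ d ∈ r.divisors,
      ArithmeticFunction.moebius (r / d) * (-1) ^ d *
        (Nat.choose ((2 * p + 2) * d - 1) (d - 1) : ℤ) := by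
  have hr0 : r ≠ 0 := by omega
  have key2 : ∀ q ∈ r.primeFactors, ((q : ℤ)) ^ (2 * r.factorization q) ∣
      ∑ d ∈ r.divisors, ArithmeticFunction.moebius (r / d) * (-1) ^ d *
        (Nat.choose ((2 * p + 2) * d - 1) (d - 1) : ℤ) := by
    intro q hqmem
    have hq : q.Prime := Nat.prime_of_mem_primeFactors hqmem
    have hqr : q ∣ r := Nat.dvd_of_mem_primeFactors hqmem
    set v := r.factorization q with hv
    have hv1 : 1 ≤ v := hq.factorization_pos_of_dvd hr0 hqr
    set m := r / q ^ v with hm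
    have hrm : q ^ v * m = r := Nat.ordProj_mul_ordCompl_eq_self r q
    have hqm : q.Coprime m := Nat.coprime_ordCompl hq hr0
    have hm0 : m ≠ 0 := by
      intro h
      rw [h, mul_zero] at hrm
      exact hr0 hrm.symm
    have hco : (q ^ v).Coprime m := Nat.Coprime.pow_left v hqm
    rw [← hrm]
    rw [sum_div_mul (q ^ v) m (pow_ne_zero v hq.pos.ne') hm0 hco
      (fun d => ArithmeticFunction.moebius ((q ^ v * m) / d) * (-1) ^ d *
        (Nat.choose ((2 * p + 2) * d - 1) (d - 1) : ℤ))]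
    rw [Nat.sum_divisors_prime_pow hq]
    rw [Finset.sum_comm]
    apply Finset.dvd_sum
    intro e he
    have hedvd : e ∣ m := (Nat.mem_divisors.mp he).1
    have he0 : e ≠ 0 := by
      rintro rfl
      exact hm0 (zero_dvd_iff.mp hedvd)
    have he1 : 1 ≤ e := Nat.pos_of_ne_zero he0
    have hdiv : ∀ i, i ≤ v → (q ^ v * m) / (q ^ i * e) = q ^ (v - i) * (m / e) := by
      intro i hi
      have hpos : 0 < q ^ i * e := Nat.mul_pos (pow_pos hq.pos _) he1
      apply Nat.div_eq_of_eq_mul_left hpos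
      calc q ^ v * m = (q ^ (v - i) * q ^ i) * ((m / e) * e) := by
            rw [← pow_add, show v - i + i = v from by omega, Nat.div_mul_cancel hedvd]
        _ = q ^ (v - i) * (m / e) * (q ^ i * e) := by ring
    have hcop : ∀ i : ℕ, (q ^ (v - i)).Coprime (m / e) :=
      fun i => Nat.Coprime.pow_left _
        (Nat.Coprime.coprime_dvd_right (Nat.div_dvd_of_dvd hedvd) hqm)
    have hterm : ∀ i ∈ Finset.range (v + 1),
        ArithmeticFunction.moebius ((q ^ v * m) / (q ^ i * e)) * (-1) ^ (q ^ i * e) *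
          (Nat.choose ((2 * p + 2) * (q ^ i * e) - 1) (q ^ i * e - 1) : ℤ)
        = ArithmeticFunction.moebius (q ^ (v - i)) *
            (ArithmeticFunction.moebius (m / e) * ((-1) ^ (q ^ i * e) *
              (Nat.choose ((2 * p + 2) * (q ^ i * e) - 1) (q ^ i * e - 1) : ℤ))) := by
      intro i hi
      have hi' : i ≤ v := by
        have := Finset.mem_range.mp hi
        omega
      rw [hdiv i hi',
        ArithmeticFunction.IsMultiplicative.map_mul_of_coprime
          ArithmeticFunction.isMultiplicative_moebius (hcop i)]
      ring
    rw [Finset.sum_congr rfl hterm]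
    rw [show v + 1 = v - 1 + 1 + 1 from by omega, Finset.sum_range_succ,
      Finset.sum_range_succ, show v - 1 + 1 = v from by omega]
    have hzero : ∑ i ∈ Finset.range (v - 1),
        ArithmeticFunction.moebius (q ^ (v - i)) *
          (ArithmeticFunction.moebius (m / e) * ((-1) ^ (q ^ i * e) *
            (Nat.choose ((2 * p + 2) * (q ^ i * e) - 1) (q ^ i * e - 1) : ℤ))) = 0 := by
      apply Finset.sum_eq_zero
      intro i hi
      have hi' : i < v - 1 := Finset.mem_range.mp hi
      rw [ArithmeticFunction.moebius_apply_prime_pow hq (show v - i ≠ 0 by omega),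
        if_neg (show ¬ v - i = 1 by omega), zero_mul]
    rw [hzero, zero_add, show v - (v - 1) = 1 from by omega, Nat.sub_self, pow_zero,
      pow_one, ArithmeticFunction.moebius_apply_one,
      ArithmeticFunction.moebius_apply_prime hq]
    have hkey := key_cong (2 * p + 2) q (q ^ (v - 1) * e) v hq ⟨p + 1, by ring⟩
      (by omega) (Nat.mul_pos (pow_pos hq.pos _) he1) hv1
      (dvd_mul_right _ _)
    have hqq : q * (q ^ (v - 1) * e) = q ^ v * e := by
      rw [← mul_assoc, ← pow_succ', show v - 1 + 1 = v from by omega]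
    rw [hqq] at hkey
    obtain ⟨w, hw⟩ := hkey
    refine ⟨ArithmeticFunction.moebius (m / e) * w, ?_⟩
    linear_combination (ArithmeticFunction.moebius (m / e) : ℤ) * hw
  have hsq : ((r : ℤ)) ^ 2 = ∏ q ∈ r.primeFactors, ((q : ℤ)) ^ (2 * r.factorization q) := by
    have h1 : (r : ℤ) = ∏ q ∈ r.primeFactors, ((q : ℤ)) ^ (r.factorization q) := by
      conv_lhs => rw [← Nat.factorization_prod_pow_eq_self hr0]
      rw [Finsupp.prod, Nat.support_factorization]
      push_cast
      rfl
    rw [h1, ← Finset.prod_pow]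
    apply Finset.prod_congr rfl
    intro q _
    rw [← pow_mul, mul_comm]
  rw [hsq]
  apply Finset.prod_dvd_of_coprime
  · intro a ha b hb hab
    apply IsCoprime.pow
    rw [Nat.isCoprime_iff_coprime]
    exact (Nat.coprime_primes (Nat.prime_of_mem_primeFactors ha)
      (Nat.prime_of_mem_primeFactors hb)).mpr hab
  · exact key2
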